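/- For f, g ∈ L^∞(T), the sum T_f T_g + T_φ T_ψ is a Toeplitz operator if and only if (V H_{f̄} 1) ⊗ (V H_g 1) + (V H_{φ̄} 1) ⊗ (V H_ψ 1) = 0, and this holds if and only if either (i) (f̄ ∈ H² or g ∈ H²) and (φ̄ ∈ H² or ψ ∈ H²), or (ii) there is a nonzero constant λ with f − λφ ∈ conj(H²) and ψ + λg ∈ H². In all these cases T_f T_g + T_φ T_ψ = T_{fg+φψ}. -/

import Mathlib

open MeasureTheory Complex AddCircle
open scoped ENNReal ComplexConjugate InnerProductSpace

noncomputable section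

namespace ToeplitzProj

instance : Fact (0 < 2 * Real.pi) := ⟨by positivity⟩
instance : Fact ((1:ℝ≥0∞) ≤ ⊤) := ⟨le_top⟩

abbrev 𝕋 : Type := AddCircle (2 * Real.pi)
abbrev μT : Measure 𝕋 := haarAddCircle
abbrev L2 : Type := Lp ℂ 2 μT
abbrev Linf : Type := Lp ℂ ⊤ μT

/-- The rank-one operator `f ⊗ g`, acting by `h ↦ ⟨h, g⟩ f = ⟪g, h⟫ • f`. -/
def rankOne {H : Type*} [NormedAddCommGroup H] [InnerProductSpace ℂ H] (f g : H) :
    H →L[ℂ] H := (innerSL ℂ g).smulRight f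

theorem memLp_conj (h : L2) : MemLp (fun x => conj ((h : 𝕋 → ℂ) x)) 2 μT :=
  ⟨RCLike.continuous_conj.comp_aestronglyMeasurable (Lp.memLp h).1,
    by
      rw [show (fun x => conj ((h : 𝕋 → ℂ) x)) = conj (h : 𝕋 → ℂ) from rfl, eLpNorm_conj]
      exact (Lp.memLp h).2⟩

/-- Pointwise complex conjugation on `L²`. -/
def conjL2 (h : L2) : L2 := (memLp_conj h).toLp _

theorem memLp_mul (φ : Linf) (f : L2) :
    MemLp ((φ : 𝕋 → ℂ) • (f : 𝕋 → ℂ)) 2 μT :=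
  (Lp.memLp f).smul (Lp.memLp φ)

/-- Multiplication by an `L^∞` function, as a bounded operator on `L²`. -/
def mulCLM (φ : Linf) : L2 →L[ℂ] L2 :=
  LinearMap.mkContinuous
    { toFun := fun f => (memLp_mul φ f).toLp _
      map_add' := by
        intro f g
        rw [← MemLp.toLp_add (memLp_mul φ f) (memLp_mul φ g)]
        apply MemLp.toLp_congr
        filter_upwards [Lp.coeFn_add f g] with x hx
        simp only [Pi.smul_apply, smul_eq_mul, Pi.mul_apply, hx, Pi.add_apply, mul_add]
      map_smul' := by
        intro c f
        show (memLp_mul φ (c • f)).toLp _ = c • (memLp_mul φ f).toLp _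
        rw [← MemLp.toLp_const_smul c (memLp_mul φ f)]
        apply MemLp.toLp_congr
        filter_upwards [Lp.coeFn_smul c f] with x hx
        simp only [Pi.smul_apply, smul_eq_mul, Pi.mul_apply, hx]
        ring }
    ‖φ‖
    (by
      intro f
      simp only [LinearMap.coe_mk, AddHom.coe_mk]
      rw [Lp.norm_toLp]
      have h := eLpNorm_smul_le_mul_eLpNorm (p := ⊤) (q := 2) (r := 2)
        (Lp.memLp f).1 (Lp.memLp φ).1
      calc (eLpNorm ((φ : 𝕋 → ℂ) • (f : 𝕋 → ℂ)) 2 μT).toReal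
          ≤ (eLpNorm (φ : 𝕋 → ℂ) ⊤ μT * eLpNorm (f : 𝕋 → ℂ) 2 μT).toReal := by
            exact ENNReal.toReal_mono (by
              exact ENNReal.mul_ne_top (Lp.memLp φ).2.ne (Lp.memLp f).2.ne) h
        _ = ‖φ‖ * ‖f‖ := by
            rw [ENNReal.toReal_mul, Lp.norm_def, Lp.norm_def])

/-- The Hardy space `H²` as a subspace of `L²`: the functions whose negative Fourier
coefficients vanish. -/
def Hardy : Submodule ℂ L2 where
  carrier := {f : L2 | ∀ n : ℤ, n < 0 → ⟪(fourierLp 2 n : L2), f⟫_ℂ = 0}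
  add_mem' := by
    intro a b ha hb n hn
    rw [inner_add_right, ha n hn, hb n hn, add_zero]
  zero_mem' := by
    intro n hn
    exact inner_zero_right _
  smul_mem' := by
    intro c a ha n hn
    rw [inner_smul_right, ha n hn, mul_zero]

theorem isClosed_Hardy : IsClosed (Hardy : Set L2) := by
  have : (Hardy : Set L2)
      = ⋂ n : ℤ, ⋂ _ : n < 0, {f : L2 | ⟪(fourierLp 2 n : L2), f⟫_ℂ = 0} := by
    ext f
    simp only [Set.mem_iInter, Set.mem_setOf_eq, SetLike.mem_coe]
    exact Iff.rfl
  rw [this]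
  exact isClosed_iInter fun n => isClosed_iInter fun _ =>
    isClosed_eq (Continuous.inner continuous_const continuous_id) continuous_const

instance : CompleteSpace Hardy := isClosed_Hardy.completeSpace_coe

/-- Inclusion of the Hardy space into `L²`. -/
def inclH : Hardy →L[ℂ] L2 := Hardy.subtypeL

/-- The Riesz projection `P : L² → H²`. -/
def projH : L2 →L[ℂ] Hardy := Hardy.orthogonalProjectionOnto

/-- The Riesz projection, viewed as an operator `L² → L²`. -/
def PFull : L2 →L[ℂ] L2 := inclH ∘L projH

/-- The Toeplitz operator `T_φ f = P(φ f)` on the Hardy space. -/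
def Toep (φ : Linf) : Hardy →L[ℂ] Hardy := projH ∘L mulCLM φ ∘L inclH

/-- The Hankel operator `H_φ f = (I − P)(φ f)`, mapping `H²` into `L²`. -/
def Hank (φ : Linf) : Hardy →L[ℂ] L2 := (mulCLM φ ∘L inclH) - (inclH ∘L Toep φ)

/-- A continuous map on the circle, as an element of `L^∞`. -/
def cLinf (g : C(𝕋, ℂ)) : Linf := ContinuousMap.toLp (E := ℂ) ⊤ μT ℂ g

/-- The coordinate function `z = e^{ix}` in `L^∞`. -/
def zL : Linf := cLinf (fourier 1)

/-- The conjugate coordinate function `z̄ = e^{-ix}` in `L^∞`. -/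
def zbarL : Linf := cLinf (fourier (-1))

/-- The constant function `c` in `L^∞`. -/
def constL (c : ℂ) : Linf := cLinf (ContinuousMap.const _ c)

/-- An `L^∞` function, viewed as an element of `L²` (the measure is finite). -/
def toL2 (φ : Linf) : L2 :=
  ((Lp.memLp φ).mono_exponent (le_top : (2:ℝ≥0∞) ≤ ⊤)).toLp φ

/-- The constant function `1`, as an element of the Hardy space. -/
def oneH : Hardy :=
  ⟨(fourierLp 2 0 : L2), fun n hn => orthonormal_fourier.2 (show n ≠ 0 from hn.ne)⟩

/-- The anti-unitary operator `V` on `L²`, `(Vh)(w) = w̄ · conj (h w)`. -/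
def Vop (h : L2) : L2 := mulCLM zbarL (conjL2 h)

/-- `φ ∈ L^∞` is an inner function: `φ ∈ H²` and `|φ| = 1` a.e. -/
def IsInnerFn (u : Linf) : Prop :=
  toL2 u ∈ Hardy ∧ ∀ᵐ x ∂μT, ‖(u : 𝕋 → ℂ) x‖ = 1

/-- `φ ∈ L^∞` is nonconstant (as an a.e. class). -/
def Nonconst (u : Linf) : Prop := ¬ ∃ c : ℂ, (u : 𝕋 → ℂ) =ᵐ[μT] fun _ => c

/-- `Q` is an orthogonal projection: self-adjoint and idempotent. -/
def IsOrthoProj {H : Type*} [NormedAddCommGroup H] [InnerProductSpace ℂ H]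
    [CompleteSpace H] (Q : H →L[ℂ] H) : Prop :=
  IsSelfAdjoint Q ∧ Q ∘L Q = Q

theorem memLinf_conj (φ : Linf) : MemLp (fun x => conj ((φ : 𝕋 → ℂ) x)) ⊤ μT :=
  ⟨RCLike.continuous_conj.comp_aestronglyMeasurable (Lp.memLp φ).1,
    by
      rw [show (fun x => conj ((φ : 𝕋 → ℂ) x)) = conj (φ : 𝕋 → ℂ) from rfl, eLpNorm_conj]
      exact (Lp.memLp φ).2⟩

/-- Pointwise complex conjugation on `L^∞`. -/
def conjLinf (φ : Linf) : Linf := (memLinf_conj φ).toLp _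

/-- The pointwise product of two `L^∞` functions. -/
def mulLinf (φ ψ : Linf) : Linf :=
  (((Lp.memLp ψ).smul (Lp.memLp φ)) :
    MemLp ((φ : 𝕋 → ℂ) • (ψ : 𝕋 → ℂ)) ⊤ μT).toLp _

/-- The Hankel operator `H_φ = (I − P) M_φ P`, as an operator on all of `L²`. -/
def HankFull (φ : Linf) : L2 →L[ℂ] L2 := (1 - PFull) ∘L mulCLM φ ∘L PFull

section Coeff

/-- The `n`-th Fourier coefficient of `x ∈ L²`. -/
def cf (x : L2) (n : ℤ) : ℂ := ⟪(fourierLp 2 n : L2), x⟫_ℂ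

lemma repr_eq_cf (x : L2) (n : ℤ) : (fourierBasis.repr x : ℤ → ℂ) n = cf x n := by
  rw [HilbertBasis.repr_apply_apply]
  rw [coe_fourierBasis]
  rfl

lemma ext_cf {x y : L2} (h : ∀ n, cf x n = cf y n) : x = y := by
  apply fourierBasis.repr.injective
  apply lp.ext
  funext n
  show (fourierBasis.repr x : ℤ → ℂ) n = (fourierBasis.repr y : ℤ → ℂ) n
  rw [repr_eq_cf, repr_eq_cf]
  exact h n

lemma cf_add (x y : L2) (n : ℤ) : cf (x + y) n = cf x n + cf y n := inner_add_right _ _ _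
lemma cf_sub (x y : L2) (n : ℤ) : cf (x - y) n = cf x n - cf y n := inner_sub_right _ _ _
lemma cf_smul (c : ℂ) (x : L2) (n : ℤ) : cf (c • x) n = c * cf x n := inner_smul_right _ _ _
lemma cf_zero (n : ℤ) : cf 0 n = 0 := inner_zero_right _
lemma cf_neg (x : L2) (n : ℤ) : cf (-x) n = - cf x n := inner_neg_right _ _

lemma cf_fourierLp (m n : ℤ) : cf (fourierLp 2 m : L2) n = if n = m then 1 else 0 :=
  orthonormal_iff_ite.mp orthonormal_fourier n m

/-- Fourier coefficients as integrals against a concrete representative. -/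
lemma cf_integral (x : L2) {F : 𝕋 → ℂ} (hx : (x : 𝕋 → ℂ) =ᵐ[μT] F) (n : ℤ) :
    cf x n = ∫ t, conj (fourier n t) * F t ∂μT := by
  rw [cf, MeasureTheory.L2.inner_def]
  refine integral_congr_ae ?_
  filter_upwards [coeFn_fourierLp 2 n, hx] with t h1 h2
  rw [RCLike.inner_apply, h1, h2, mul_comm]

lemma inner_eq_tsum (x y : L2) : ⟪x, y⟫_ℂ = ∑' n : ℤ, cf y n * conj (cf x n) := by
  have h2 := (innerSL ℂ x).hasSum (fourierBasis.hasSum_repr y)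
  rw [show ⟪x, y⟫_ℂ = innerSL ℂ x y from rfl, ← h2.tsum_eq]
  refine tsum_congr fun n => ?_
  simp only [innerSL_apply_apply, inner_smul_right, repr_eq_cf]
  congr 1
  rw [← inner_conj_symm, ← HilbertBasis.repr_apply_apply, repr_eq_cf]

end Coeff
section AE

lemma mulCLM_coeFn (φ : Linf) (x : L2) :
    (mulCLM φ x : 𝕋 → ℂ) =ᵐ[μT] fun t => (φ : 𝕋 → ℂ) t * (x : 𝕋 → ℂ) t := by
  have : mulCLM φ x = (memLp_mul φ x).toLp _ := rfl
  rw [this]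
  filter_upwards [(memLp_mul φ x).coeFn_toLp] with t ht
  rw [ht]; rfl

lemma toL2_coeFn (φ : Linf) : (toL2 φ : 𝕋 → ℂ) =ᵐ[μT] (φ : 𝕋 → ℂ) :=
  MemLp.coeFn_toLp _

lemma conjL2_coeFn (x : L2) :
    (conjL2 x : 𝕋 → ℂ) =ᵐ[μT] fun t => conj ((x : 𝕋 → ℂ) t) :=
  MemLp.coeFn_toLp _

lemma conjLinf_coeFn (φ : Linf) :
    (conjLinf φ : 𝕋 → ℂ) =ᵐ[μT] fun t => conj ((φ : 𝕋 → ℂ) t) :=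
  MemLp.coeFn_toLp _

lemma mulLinf_coeFn (φ ψ : Linf) :
    (mulLinf φ ψ : 𝕋 → ℂ) =ᵐ[μT] fun t => (φ : 𝕋 → ℂ) t * (ψ : 𝕋 → ℂ) t := by
  filter_upwards [(MemLp.coeFn_toLp (((Lp.memLp ψ).smul (Lp.memLp φ)) :
    MemLp ((φ : 𝕋 → ℂ) • (ψ : 𝕋 → ℂ)) ⊤ μT))] with t ht
  rw [show (mulLinf φ ψ : 𝕋 → ℂ) t = _ from ht]; rfl

lemma cLinf_coeFn (g : C(𝕋, ℂ)) : (cLinf g : 𝕋 → ℂ) =ᵐ[μT] fun t => g t := by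
  filter_upwards [ContinuousMap.coeFn_toLp (E := ℂ) μT (𝕜 := ℂ) (p := ⊤) g] with t ht
  exact ht

lemma zL_coeFn : (zL : 𝕋 → ℂ) =ᵐ[μT] fun t => fourier 1 t := cLinf_coeFn _

lemma zbarL_coeFn : (zbarL : 𝕋 → ℂ) =ᵐ[μT] fun t => fourier (-1) t := cLinf_coeFn _

/-- Multiplication operators commute. -/
lemma mulCLM_comm (φ ψ : Linf) (x : L2) :
    mulCLM φ (mulCLM ψ x) = mulCLM ψ (mulCLM φ x) := by
  apply MeasureTheory.Lp.ext
  filter_upwards [mulCLM_coeFn φ (mulCLM ψ x), mulCLM_coeFn ψ x,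
    mulCLM_coeFn ψ (mulCLM φ x), mulCLM_coeFn φ x] with t h1 h2 h3 h4
  rw [h1, h2, h3, h4]; ring

lemma mulCLM_mulLinf (φ ψ : Linf) (x : L2) :
    mulCLM (mulLinf φ ψ) x = mulCLM φ (mulCLM ψ x) := by
  apply MeasureTheory.Lp.ext
  filter_upwards [mulCLM_coeFn (mulLinf φ ψ) x, mulCLM_coeFn φ (mulCLM ψ x),
    mulCLM_coeFn ψ x, mulLinf_coeFn φ ψ] with t h1 h2 h3 h4
  rw [h1, h2, h3, h4]; ring

lemma mulCLM_add_symbol (φ ψ : Linf) (x : L2) :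
    mulCLM (φ + ψ) x = mulCLM φ x + mulCLM ψ x := by
  apply MeasureTheory.Lp.ext
  filter_upwards [mulCLM_coeFn (φ + ψ) x, Lp.coeFn_add (mulCLM φ x) (mulCLM ψ x),
    mulCLM_coeFn φ x, mulCLM_coeFn ψ x, Lp.coeFn_add φ ψ] with t h1 h2 h3 h4 h5
  rw [h1, h5]
  simp only [Pi.add_apply, h2, h3, h4]
  ring

lemma mulCLM_smul_symbol (c : ℂ) (φ : Linf) (x : L2) :
    mulCLM (c • φ) x = c • mulCLM φ x := by
  apply MeasureTheory.Lp.ext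
  filter_upwards [mulCLM_coeFn (c • φ) x, Lp.coeFn_smul c (mulCLM φ x),
    mulCLM_coeFn φ x, Lp.coeFn_smul c φ] with t h1 h2 h3 h4
  rw [h1, h4]
  simp only [Pi.smul_apply, h2, h3, smul_eq_mul]
  ring

lemma mulCLM_sub_smul_symbol (f φ : Linf) (l : ℂ) (x : L2) :
    mulCLM (f - l • φ) x = mulCLM f x - l • mulCLM φ x := by
  have : f - l • φ + l • φ = f := by abel
  have h2 := mulCLM_add_symbol (f - l • φ) (l • φ) x
  rw [this, mulCLM_smul_symbol] at h2
  rw [eq_sub_iff_add_eq, ← h2]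

lemma mulCLM_add_smul_symbol (ψ g : Linf) (l : ℂ) (x : L2) :
    mulCLM (ψ + l • g) x = mulCLM ψ x + l • mulCLM g x := by
  rw [mulCLM_add_symbol, mulCLM_smul_symbol]

lemma toL2_sub_smul (f φ : Linf) (l : ℂ) :
    toL2 (f - l • φ) = toL2 f - l • toL2 φ := by
  apply MeasureTheory.Lp.ext
  filter_upwards [toL2_coeFn (f - l • φ), Lp.coeFn_sub f (l • φ), Lp.coeFn_smul l φ,
    Lp.coeFn_sub (toL2 f) (l • toL2 φ), Lp.coeFn_smul l (toL2 φ), toL2_coeFn f, toL2_coeFn φ]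
    with t h1 h2 h3 h4 h5 h6 h7
  rw [h1, h4]
  simp only [Pi.sub_apply, h2, h5, Pi.smul_apply, h3, h6, h7]

lemma toL2_add_smul (ψ g : Linf) (l : ℂ) :
    toL2 (ψ + l • g) = toL2 ψ + l • toL2 g := by
  apply MeasureTheory.Lp.ext
  filter_upwards [toL2_coeFn (ψ + l • g), Lp.coeFn_add ψ (l • g), Lp.coeFn_smul l g,
    Lp.coeFn_add (toL2 ψ) (l • toL2 g), Lp.coeFn_smul l (toL2 g), toL2_coeFn ψ, toL2_coeFn g]
    with t h1 h2 h3 h4 h5 h6 h7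
  rw [h1, h4]
  simp only [Pi.add_apply, h2, h5, Pi.smul_apply, h3, h6, h7]

lemma mulCLM_fourier_zero (φ : Linf) : mulCLM φ (fourierLp 2 0 : L2) = toL2 φ := by
  apply MeasureTheory.Lp.ext
  filter_upwards [mulCLM_coeFn φ (fourierLp 2 0 : L2), coeFn_fourierLp 2 (0 : ℤ),
    toL2_coeFn φ] with t h1 h2 h3
  rw [h1, h2, h3, fourier_zero, mul_one]

lemma zbar_z_cancel (x : L2) : mulCLM zbarL (mulCLM zL x) = x := by
  apply MeasureTheory.Lp.ext
  filter_upwards [mulCLM_coeFn zbarL (mulCLM zL x), mulCLM_coeFn zL x,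
    zbarL_coeFn, zL_coeFn] with t h1 h2 h3 h4
  rw [h1, h3, h2, h4, ← mul_assoc, ← fourier_add]
  norm_num

end AE
section CoeffComp

lemma conj_fourier_mul (n m : ℤ) (t : 𝕋) :
    conj (fourier n t) * fourier m t = conj (fourier (n - m) t) := by
  have h1 : conj ((fourier (T := 2 * Real.pi) n) t) = fourier (-n) t := (fourier_neg).symm
  have h2 : conj ((fourier (T := 2 * Real.pi) (n - m)) t) = fourier (-(n - m)) t :=
    (fourier_neg).symm
  rw [h1, h2, ← fourier_add]
  have : -n + m = -(n - m) := by ring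
  rw [this]

lemma cf_zmul (x : L2) (n : ℤ) : cf (mulCLM zL x) n = cf x (n - 1) := by
  rw [cf_integral (mulCLM zL x) (mulCLM_coeFn zL x) n,
      cf_integral x (Filter.EventuallyEq.refl _ _) (n - 1)]
  refine integral_congr_ae ?_
  filter_upwards [zL_coeFn] with t ht
  rw [ht, ← mul_assoc, conj_fourier_mul]

lemma cf_zbarmul (x : L2) (n : ℤ) : cf (mulCLM zbarL x) n = cf x (n + 1) := by
  rw [cf_integral (mulCLM zbarL x) (mulCLM_coeFn zbarL x) n,
      cf_integral x (Filter.EventuallyEq.refl _ _) (n + 1)]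
  refine integral_congr_ae ?_
  filter_upwards [zbarL_coeFn] with t ht
  rw [ht, ← mul_assoc, conj_fourier_mul]
  norm_num

lemma cf_conjL2 (x : L2) (n : ℤ) : cf (conjL2 x) n = conj (cf x (-n)) := by
  rw [cf_integral (conjL2 x) (conjL2_coeFn x) n,
      cf_integral x (Filter.EventuallyEq.refl _ _) (-n)]
  rw [← integral_conj]
  refine integral_congr_ae (Filter.Eventually.of_forall fun t => ?_)
  simp [map_mul, fourier_neg]

lemma cf_Vop (x : L2) (n : ℤ) : cf (Vop x) n = conj (cf x (-1 - n)) := by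
  rw [Vop, cf_zbarmul, cf_conjL2]
  ring_nf

lemma eL_mem_Hardy {n : ℤ} (hn : 0 ≤ n) : (fourierLp 2 n : L2) ∈ Hardy := by
  intro m hm
  rw [show ⟪(fourierLp 2 m : L2), (fourierLp 2 n : L2)⟫_ℂ = cf (fourierLp 2 n : L2) m from rfl,
    cf_fourierLp]
  rw [if_neg]; omega

lemma mem_Hardy_iff {x : L2} : x ∈ Hardy ↔ ∀ n < 0, cf x n = 0 := Iff.rfl

lemma cf_PFull (x : L2) (n : ℤ) : cf (PFull x) n = if 0 ≤ n then cf x n else 0 := by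
  by_cases hn : 0 ≤ n
  · rw [if_pos hn]
    have h1 : x - PFull x ∈ Hardyᗮ := Submodule.sub_starProjection_mem_orthogonal (K := Hardy) x
    have h2 := (Submodule.mem_orthogonal Hardy (x - PFull x)).mp h1
      (fourierLp 2 n : L2) (eL_mem_Hardy hn)
    have h3 : cf x n - cf (PFull x) n = 0 := by
      rw [← cf_sub]; exact h2
    exact (sub_eq_zero.mp h3).symm
  · rw [if_neg hn]
    exact (projH x).2 n (by omega)

lemma PFull_mem (x : L2) : PFull x ∈ Hardy := (projH x).2

lemma PFull_of_mem {x : L2} (hx : ∀ n < 0, cf x n = 0) : PFull x = x := by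
  apply ext_cf
  intro n
  rw [cf_PFull]
  by_cases hn : 0 ≤ n
  · rw [if_pos hn]
  · rw [if_neg hn, hx n (by omega)]

lemma cf_mulCLM_fourier (φ : Linf) (m n : ℤ) :
    cf (mulCLM φ (fourierLp 2 m : L2)) n = cf (toL2 φ) (n - m) := by
  rw [cf_integral _ (mulCLM_coeFn φ _) n, cf_integral _ (toL2_coeFn φ) (n - m)]
  refine integral_congr_ae ?_
  filter_upwards [coeFn_fourierLp 2 m] with t ht
  rw [ht]
  calc conj (fourier n t) * ((φ : 𝕋 → ℂ) t * fourier m t)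
      = (conj (fourier n t) * fourier m t) * (φ : 𝕋 → ℂ) t := by ring
    _ = conj (fourier (n - m) t) * (φ : 𝕋 → ℂ) t := by rw [conj_fourier_mul]

lemma cf_mulCLM (φ : Linf) (x : L2) (n : ℤ) :
    cf (mulCLM φ x) n = ∑' m : ℤ, cf x m * cf (toL2 φ) (n - m) := by
  have h2 := (mulCLM φ).hasSum (fourierBasis.hasSum_repr x)
  have h3 := (innerSL ℂ (fourierLp 2 n : L2)).hasSum h2
  rw [show cf (mulCLM φ x) n = innerSL ℂ (fourierLp 2 n : L2) (mulCLM φ x) from rfl, ← h3.tsum_eq]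
  refine tsum_congr fun m => ?_
  have hb := congrFun (coe_fourierBasis (T := 2 * Real.pi)) m
  simp only [innerSL_apply_apply, _root_.map_smul, inner_smul_right, repr_eq_cf, hb]
  congr 1
  exact cf_mulCLM_fourier φ m n

end CoeffComp
section HankV

/-- Fourier coefficient of an `L^∞` symbol. -/
def dd (φ : Linf) (n : ℤ) : ℂ := cf (toL2 φ) n

lemma dd_conjLinf (φ : Linf) (n : ℤ) : dd (conjLinf φ) n = conj (dd φ (-n)) := by
  rw [dd, dd, cf_integral _ (toL2_coeFn (conjLinf φ)) n, cf_integral _ (toL2_coeFn φ) (-n),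
    ← integral_conj]
  refine integral_congr_ae ?_
  filter_upwards [conjLinf_coeFn φ] with t ht
  rw [ht]
  simp [map_mul, fourier_neg]

lemma hank_one_coe (φ : Linf) : (Hank φ oneH : L2) = toL2 φ - PFull (toL2 φ) := by
  have h1 : inclH oneH = (fourierLp 2 0 : L2) := rfl
  rw [Hank]
  simp only [ContinuousLinearMap.sub_apply, ContinuousLinearMap.comp_apply]
  rw [h1, mulCLM_fourier_zero]
  congr 1
  show inclH (projH (mulCLM φ (inclH oneH))) = PFull (toL2 φ)
  rw [show PFull (toL2 φ) = inclH (projH (toL2 φ)) from rfl, h1, mulCLM_fourier_zero]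

lemma cf_hank_one (φ : Linf) (n : ℤ) :
    cf (Hank φ oneH) n = if n < 0 then dd φ n else 0 := by
  rw [hank_one_coe, cf_sub, cf_PFull]
  by_cases hn : 0 ≤ n
  · rw [if_pos hn, if_neg (by omega), sub_self]
  · rw [if_neg hn, if_pos (by omega), sub_zero]; rfl

lemma cf_vop_hank (g : Linf) (n : ℤ) :
    cf (Vop (Hank g oneH)) n = if 0 ≤ n then conj (dd g (-1 - n)) else 0 := by
  rw [cf_Vop, cf_hank_one]
  by_cases hn : 0 ≤ n
  · rw [if_pos (by omega : (-1 - n : ℤ) < 0), if_pos hn]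
  · rw [if_neg (by omega : ¬(-1 - n : ℤ) < 0), if_neg hn, map_zero]

lemma cf_vop_hank_conj (f : Linf) (n : ℤ) :
    cf (Vop (Hank (conjLinf f) oneH)) n = if 0 ≤ n then dd f (n + 1) else 0 := by
  rw [cf_vop_hank]
  by_cases hn : 0 ≤ n
  · rw [if_pos hn, if_pos hn, dd_conjLinf]
    rw [show -(-1 - n) = n + 1 by ring, Complex.conj_conj]
  · rw [if_neg hn, if_neg hn]

lemma vop_hank_mem (g : Linf) : Vop (Hank g oneH) ∈ Hardy := by
  intro n hn
  rw [show ⟪(fourierLp 2 n : L2), Vop (Hank g oneH)⟫_ℂ = cf (Vop (Hank g oneH)) n from rfl,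
    cf_vop_hank, if_neg (by omega)]

lemma vop_hank_eq_zero_iff (g : Linf) : Vop (Hank g oneH) = 0 ↔ toL2 g ∈ Hardy := by
  constructor
  · intro h k hk
    have h2 : cf (Vop (Hank g oneH)) (-1 - k) = 0 := by rw [h]; exact cf_zero _
    rw [cf_vop_hank, if_pos (by omega : (0:ℤ) ≤ -1 - k)] at h2
    have : dd g (-1 - (-1 - k)) = 0 := by
      have := congrArg conj h2
      rwa [Complex.conj_conj, map_zero] at this
    rwa [show -1 - (-1 - k) = k by ring] at this
  · intro h
    apply ext_cf
    intro n
    rw [cf_zero, cf_vop_hank]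
    by_cases hn : 0 ≤ n
    · have h0 : dd g (-1 - n) = 0 := h (-1 - n) (by omega)
      rw [if_pos hn, h0, map_zero]
    · rw [if_neg hn]

lemma vop_hank_combo_u (f φ : Linf) (l : ℂ) :
    Vop (Hank (conjLinf (f - l • φ)) oneH)
      = Vop (Hank (conjLinf f) oneH) - l • Vop (Hank (conjLinf φ) oneH) := by
  apply ext_cf
  intro n
  rw [cf_sub, cf_smul, cf_vop_hank_conj, cf_vop_hank_conj, cf_vop_hank_conj]
  have hdd : dd (f - l • φ) (n + 1) = dd f (n + 1) - l * dd φ (n + 1) := by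
    rw [dd, toL2_sub_smul, cf_sub, cf_smul]; rfl
  by_cases hn : 0 ≤ n
  · rw [if_pos hn, if_pos hn, if_pos hn, hdd]
  · rw [if_neg hn, if_neg hn, if_neg hn, mul_zero, sub_zero]

lemma vop_hank_combo_v (ψ g : Linf) (l : ℂ) :
    Vop (Hank (ψ + l • g) oneH)
      = Vop (Hank ψ oneH) + conj l • Vop (Hank g oneH) := by
  apply ext_cf
  intro n
  rw [cf_add, cf_smul, cf_vop_hank, cf_vop_hank, cf_vop_hank]
  have hdd : dd (ψ + l • g) (-1 - n) = dd ψ (-1 - n) + l * dd g (-1 - n) := by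
    rw [dd, toL2_add_smul, cf_add, cf_smul]; rfl
  by_cases hn : 0 ≤ n
  · rw [if_pos hn, if_pos hn, if_pos hn, hdd, map_add, map_mul]
  · rw [if_neg hn, if_neg hn, if_neg hn, mul_zero, add_zero]

end HankV
section Main

lemma PzbarP (x : L2) : PFull (mulCLM zbarL (PFull x)) = PFull (mulCLM zbarL x) := by
  apply ext_cf
  intro n
  rw [cf_PFull, cf_zbarmul, cf_PFull, cf_PFull, cf_zbarmul]
  by_cases hn : 0 ≤ n
  · rw [if_pos hn, if_pos hn, if_pos (by omega : (0:ℤ) ≤ n + 1)]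
  · rw [if_neg hn, if_neg hn]

lemma shift_out (v : L2) :
    PFull (mulCLM zL v) = mulCLM zL (PFull v) + cf v (-1) • (fourierLp 2 0 : L2) := by
  apply ext_cf
  intro n
  rw [cf_PFull, cf_zmul, cf_add, cf_zmul, cf_PFull, cf_smul, cf_fourierLp]
  by_cases h0 : n = 0
  · subst h0
    rw [if_pos (le_refl (0:ℤ)), if_neg (by omega : ¬(0:ℤ) ≤ 0 - 1), if_pos rfl,
      mul_one, zero_add]
    norm_num
  · by_cases hn : 0 ≤ n
    · rw [if_pos hn, if_pos (by omega : (0:ℤ) ≤ n - 1), if_neg h0, mul_zero, add_zero]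
    · rw [if_neg hn, if_neg (by omega : ¬(0:ℤ) ≤ n - 1), if_neg h0, mul_zero, add_zero]

lemma Pzbar_toL2 (f : Linf) :
    PFull (mulCLM zbarL (toL2 f)) = Vop (Hank (conjLinf f) oneH) := by
  apply ext_cf
  intro n
  rw [cf_PFull, cf_zbarmul, cf_vop_hank_conj]
  rfl

lemma coeff_eq_inner (g : Linf) (w : L2) (hw : ∀ n < 0, cf w n = 0) :
    cf (mulCLM g w) (-1) = ⟪Vop (Hank g oneH), w⟫_ℂ := by
  rw [cf_mulCLM, inner_eq_tsum]
  refine tsum_congr fun m => ?_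
  rw [cf_vop_hank]
  by_cases hm : 0 ≤ m
  · rw [if_pos hm, Complex.conj_conj]
    rfl
  · rw [if_neg hm, map_zero, mul_zero, hw m (by omega), zero_mul]

lemma main_pair (f g : Linf) (w : L2) (hw : ∀ n < 0, cf w n = 0) :
    PFull (mulCLM zbarL (PFull (mulCLM f (PFull (mulCLM g (PFull (mulCLM zL w)))))))
      = PFull (mulCLM f (PFull (mulCLM g w)))
        + ⟪Vop (Hank g oneH), w⟫_ℂ • Vop (Hank (conjLinf f) oneH) := by
  have h0 : PFull (mulCLM zL w) = mulCLM zL w :=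
    PFull_of_mem (fun n hn => by rw [cf_zmul]; exact hw _ (by omega))
  have h1 : mulCLM g (mulCLM zL w) = mulCLM zL (mulCLM g w) := mulCLM_comm g zL w
  rw [h0, h1, shift_out (mulCLM g w)]
  rw [map_add (mulCLM f), (mulCLM f).map_smul, mulCLM_fourier_zero,
    mulCLM_comm f zL, PzbarP]
  rw [map_add (mulCLM zbarL), (mulCLM zbarL).map_smul, zbar_z_cancel]
  rw [map_add PFull, PFull.map_smul, Pzbar_toL2, coeff_eq_inner g w hw]

end Main
section Prod

/-- If `g ∈ H²∩L^∞` then multiplication by `g` preserves the Hardy space. -/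
lemma mul_mem_Hardy {g : Linf} (hg : toL2 g ∈ Hardy) (w : L2) (hw : ∀ n < 0, cf w n = 0) :
    PFull (mulCLM g w) = mulCLM g w := by
  apply PFull_of_mem
  intro n hn
  rw [cf_mulCLM]
  rw [show (0:ℂ) = ∑' (_ : ℤ), (0:ℂ) by rw [tsum_zero]]
  refine tsum_congr fun m => ?_
  by_cases hm : m < 0
  · rw [hw m hm, zero_mul]
  · have h0 : cf (toL2 g) (n - m) = 0 := hg (n - m) (by omega)
    rw [h0, mul_zero]

/-- If `f̄ ∈ H²` then `P (f x) = 0` whenever all nonnegative coefficients of `x` vanish. -/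
lemma P_mul_anti {f : Linf} (hf : toL2 (conjLinf f) ∈ Hardy) (x : L2)
    (hx : ∀ n, 0 ≤ n → cf x n = 0) :
    PFull (mulCLM f x) = 0 := by
  have hf' : ∀ k : ℤ, 1 ≤ k → dd f k = 0 := by
    intro k hk
    have h0 : dd (conjLinf f) (-k) = 0 := hf (-k) (by omega)
    rw [dd_conjLinf, show -(-k) = k by ring] at h0
    have := congrArg conj h0
    rwa [Complex.conj_conj, map_zero] at this
  apply ext_cf
  intro n
  rw [cf_zero, cf_PFull]
  by_cases hn : 0 ≤ n
  · rw [if_pos hn, cf_mulCLM]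
    rw [show (0:ℂ) = ∑' (_ : ℤ), (0:ℂ) by rw [tsum_zero]]
    refine tsum_congr fun m => ?_
    by_cases hm : 0 ≤ m
    · rw [hx m hm, zero_mul]
    · have h0 : cf (toL2 f) (n - m) = 0 := hf' (n - m) (by omega)
      rw [h0, mul_zero]
  · rw [if_neg hn]

lemma prod_sum_eq (f g φ ψ : Linf) (w : L2) (hw : ∀ n < 0, cf w n = 0)
    (hcase : ((toL2 (conjLinf f) ∈ Hardy ∨ toL2 g ∈ Hardy)
        ∧ (toL2 (conjLinf φ) ∈ Hardy ∨ toL2 ψ ∈ Hardy))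
      ∨ ∃ l : ℂ, l ≠ 0 ∧ toL2 (conjLinf (f - l • φ)) ∈ Hardy
          ∧ toL2 (ψ + l • g) ∈ Hardy) :
    PFull (mulCLM f (PFull (mulCLM g w))) + PFull (mulCLM φ (PFull (mulCLM ψ w)))
      = PFull (mulCLM (mulLinf f g + mulLinf φ ψ) w) := by
  have hQcf : ∀ (a : Linf), ∀ n, 0 ≤ n → cf (mulCLM a w - PFull (mulCLM a w)) n = 0 := by
    intro a n hn
    rw [cf_sub, cf_PFull, if_pos hn, sub_self]
  have expand : ∀ (a b : Linf),
      PFull (mulCLM a (PFull (mulCLM b w)))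
        = PFull (mulCLM a (mulCLM b w))
          - PFull (mulCLM a (mulCLM b w - PFull (mulCLM b w))) := by
    intro a b
    rw [map_sub (mulCLM a), map_sub PFull]
    abel
  have main : PFull (mulCLM f (mulCLM g w - PFull (mulCLM g w)))
      + PFull (mulCLM φ (mulCLM ψ w - PFull (mulCLM ψ w))) = 0 := by
    rcases hcase with ⟨hfg, hφψ⟩ | ⟨l, hl, hk, hj⟩
    · have z1 : PFull (mulCLM f (mulCLM g w - PFull (mulCLM g w))) = 0 := by
        rcases hfg with hf | hg
        · exact P_mul_anti hf _ (hQcf g)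
        · rw [mul_mem_Hardy hg w hw, sub_self, map_zero, map_zero]
      have z2 : PFull (mulCLM φ (mulCLM ψ w - PFull (mulCLM ψ w))) = 0 := by
        rcases hφψ with hφ | hψ
        · exact P_mul_anti hφ _ (hQcf ψ)
        · rw [mul_mem_Hardy hψ w hw, sub_self, map_zero, map_zero]
      rw [z1, z2, add_zero]
    · -- case (ii)
      have hfsplit : ∀ x : L2, mulCLM f x = mulCLM (f - l • φ) x + l • mulCLM φ x := by
        intro x
        rw [mulCLM_sub_smul_symbol]
        abel
      have hψsplit : mulCLM ψ w = mulCLM (ψ + l • g) w - l • mulCLM g w := by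
        rw [mulCLM_add_smul_symbol]
        abel
      have hPj : PFull (mulCLM (ψ + l • g) w) = mulCLM (ψ + l • g) w :=
        mul_mem_Hardy hj w hw
      have hQψ : mulCLM ψ w - PFull (mulCLM ψ w)
          = -(l • (mulCLM g w - PFull (mulCLM g w))) := by
        rw [hψsplit, map_sub, hPj, PFull.map_smul]
        rw [smul_sub]
        abel
      rw [hQψ, hfsplit (mulCLM g w - PFull (mulCLM g w))]
      rw [map_add PFull, P_mul_anti hk _ (hQcf g), zero_add]
      rw [PFull.map_smul, map_neg (mulCLM φ), (mulCLM φ).map_smul, map_neg PFull,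
        PFull.map_smul]
      abel
  calc PFull (mulCLM f (PFull (mulCLM g w))) + PFull (mulCLM φ (PFull (mulCLM ψ w)))
      = (PFull (mulCLM f (mulCLM g w)) + PFull (mulCLM φ (mulCLM ψ w)))
        - (PFull (mulCLM f (mulCLM g w - PFull (mulCLM g w)))
          + PFull (mulCLM φ (mulCLM ψ w - PFull (mulCLM ψ w)))) := by
        rw [expand f g, expand φ ψ]; abel
    _ = PFull (mulCLM f (mulCLM g w)) + PFull (mulCLM φ (mulCLM ψ w)) := by
        rw [main, sub_zero]
    _ = PFull (mulCLM (mulLinf f g + mulLinf φ ψ) w) := by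
        rw [mulCLM_add_symbol, map_add PFull, mulCLM_mulLinf, mulCLM_mulLinf]

end Prod
section Ops

lemma hardy_cf (h : Hardy) : ∀ n < 0, cf ((h : L2)) n = 0 := h.2

lemma lhs_coe (f g φ ψ : Linf) (h : Hardy) :
    (((Toep zbarL ∘L ((Toep f ∘L Toep g + Toep φ ∘L Toep ψ) ∘L Toep zL)) h : Hardy) : L2)
      = PFull (mulCLM zbarL
          (PFull (mulCLM f (PFull (mulCLM g (PFull (mulCLM zL (h : L2))))))
            + PFull (mulCLM φ (PFull (mulCLM ψ (PFull (mulCLM zL (h : L2)))))))) := rfl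

lemma rhs_coe (f g φ ψ : Linf) (h : Hardy) :
    (((Toep f ∘L Toep g + Toep φ ∘L Toep ψ) h : Hardy) : L2)
      = PFull (mulCLM f (PFull (mulCLM g (h : L2))))
        + PFull (mulCLM φ (PFull (mulCLM ψ (h : L2)))) := rfl

lemma key_identity (f g φ ψ : Linf) (h : Hardy) :
    (((Toep zbarL ∘L ((Toep f ∘L Toep g + Toep φ ∘L Toep ψ) ∘L Toep zL)) h : Hardy) : L2)
      = (((Toep f ∘L Toep g + Toep φ ∘L Toep ψ) h : Hardy) : L2)
        + (⟪Vop (Hank g oneH), (h : L2)⟫_ℂ • Vop (Hank (conjLinf f) oneH)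
          + ⟪Vop (Hank ψ oneH), (h : L2)⟫_ℂ • Vop (Hank (conjLinf φ) oneH)) := by
  rw [lhs_coe, rhs_coe]
  rw [map_add (mulCLM zbarL), map_add PFull,
    main_pair f g (h : L2) (hardy_cf h), main_pair φ ψ (h : L2) (hardy_cf h)]
  abel

lemma op_iff (f g φ ψ : Linf) :
    (Toep zbarL ∘L ((Toep f ∘L Toep g + Toep φ ∘L Toep ψ) ∘L Toep zL)
        = Toep f ∘L Toep g + Toep φ ∘L Toep ψ)
      ↔ ∀ h : Hardy,
          ⟪Vop (Hank g oneH), (h : L2)⟫_ℂ • Vop (Hank (conjLinf f) oneH)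
            + ⟪Vop (Hank ψ oneH), (h : L2)⟫_ℂ • Vop (Hank (conjLinf φ) oneH) = 0 := by
  constructor
  · intro heq h
    have hk := key_identity f g φ ψ h
    rw [heq] at hk
    exact (left_eq_add.mp hk)
  · intro hz
    apply ContinuousLinearMap.ext
    intro h
    apply Subtype.ext
    rw [key_identity f g φ ψ h, hz h, add_zero]

lemma ranktwo (f g φ ψ : Linf) :
    (∀ h : Hardy,
        ⟪Vop (Hank g oneH), (h : L2)⟫_ℂ • Vop (Hank (conjLinf f) oneH)
          + ⟪Vop (Hank ψ oneH), (h : L2)⟫_ℂ • Vop (Hank (conjLinf φ) oneH) = 0)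
    ↔ ((toL2 (conjLinf f) ∈ Hardy ∨ toL2 g ∈ Hardy)
          ∧ (toL2 (conjLinf φ) ∈ Hardy ∨ toL2 ψ ∈ Hardy))
        ∨ ∃ l : ℂ, l ≠ 0 ∧ toL2 (conjLinf (f - l • φ)) ∈ Hardy
            ∧ toL2 (ψ + l • g) ∈ Hardy := by
  set uf := Vop (Hank (conjLinf f) oneH) with huf_def
  set vg := Vop (Hank g oneH) with hvg_def
  set uφ := Vop (Hank (conjLinf φ) oneH) with huφ_def
  set vψ := Vop (Hank ψ oneH) with hvψ_def
  have Tuf : uf = 0 ↔ toL2 (conjLinf f) ∈ Hardy := vop_hank_eq_zero_iff _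
  have Tvg : vg = 0 ↔ toL2 g ∈ Hardy := vop_hank_eq_zero_iff g
  have Tuφ : uφ = 0 ↔ toL2 (conjLinf φ) ∈ Hardy := vop_hank_eq_zero_iff _
  have Tvψ : vψ = 0 ↔ toL2 ψ ∈ Hardy := vop_hank_eq_zero_iff ψ
  have Tii : ∀ l : ℂ, (uf - l • uφ = 0 ↔ toL2 (conjLinf (f - l • φ)) ∈ Hardy) := by
    intro l
    rw [huf_def, huφ_def, ← vop_hank_combo_u]
    exact vop_hank_eq_zero_iff _
  have Tjj : ∀ l : ℂ, (vψ + conj l • vg = 0 ↔ toL2 (ψ + l • g) ∈ Hardy) := by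
    intro l
    rw [hvψ_def, hvg_def, ← vop_hank_combo_v]
    exact vop_hank_eq_zero_iff _
  constructor
  · intro H
    by_cases hA : uf = 0 ∨ vg = 0
    · left
      refine ⟨?_, ?_⟩
      · rcases hA with h0 | h0
        exacts [Or.inl (Tuf.mp h0), Or.inr (Tvg.mp h0)]
      · have h2 : ∀ h : Hardy, ⟪vψ, (h : L2)⟫_ℂ • uφ = 0 := by
          intro h
          have hH := H h
          rcases hA with h0 | h0
          · rwa [h0, smul_zero, zero_add] at hH
          · rwa [h0, inner_zero_left, zero_smul, zero_add] at hH
        have h3 := h2 ⟨vψ, vop_hank_mem ψ⟩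
        rcases smul_eq_zero.mp h3 with h4 | h4
        · exact Or.inr (Tvψ.mp (inner_self_eq_zero.mp h4))
        · exact Or.inl (Tuφ.mp h4)
    · push_neg at hA
      obtain ⟨huf, hvg⟩ := hA
      have H1 := H ⟨vg, vop_hank_mem g⟩
      have ha : (⟪vg, vg⟫_ℂ) ≠ 0 := fun h0 => hvg (inner_self_eq_zero.mp h0)
      set l : ℂ := -(⟪vψ, vg⟫_ℂ / ⟪vg, vg⟫_ℂ) with hl
      have hsum : ⟪vg, vg⟫_ℂ • uf = -(⟪vψ, vg⟫_ℂ • uφ) :=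
        eq_neg_of_add_eq_zero_left H1
      have hufl : uf = l • uφ := by
        calc uf = (⟪vg, vg⟫_ℂ)⁻¹ • (⟪vg, vg⟫_ℂ • uf) := by
              rw [smul_smul, inv_mul_cancel₀ ha, one_smul]
          _ = (⟪vg, vg⟫_ℂ)⁻¹ • (-(⟪vψ, vg⟫_ℂ • uφ)) := by rw [hsum]
          _ = l • uφ := by
              rw [smul_neg, smul_smul, ← neg_smul, hl]
              congr 1
              rw [div_eq_mul_inv]
              ring
      have hl0 : l ≠ 0 := fun h0 => huf (by rw [hufl, h0, zero_smul])
      have huφ0 : uφ ≠ 0 := fun h0 => huf (by rw [hufl, h0, smul_zero])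
      have hscal : ∀ h : Hardy, ⟪vψ + conj l • vg, (h : L2)⟫_ℂ = 0 := by
        intro h
        have H2 := H h
        rw [hufl, smul_smul, ← add_smul] at H2
        have h5 := (smul_eq_zero.mp H2).resolve_right huφ0
        rw [inner_add_left, inner_smul_left, Complex.conj_conj]
        linear_combination h5
      have h6 := hscal ⟨vψ + conj l • vg,
        Hardy.add_mem (vop_hank_mem ψ) (Hardy.smul_mem _ (vop_hank_mem g))⟩
      have hv0 : vψ + conj l • vg = 0 := inner_self_eq_zero.mp h6
      exact Or.inr ⟨l, hl0, (Tii l).mp (by rw [sub_eq_zero]; exact hufl), (Tjj l).mp hv0⟩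
  · rintro (⟨h1, h2⟩ | ⟨l, hl, hk, hj⟩) h
    · have z1 : ⟪vg, (h : L2)⟫_ℂ • uf = 0 := by
        rcases h1 with h1 | h1
        · rw [Tuf.mpr h1, smul_zero]
        · rw [Tvg.mpr h1, inner_zero_left, zero_smul]
      have z2 : ⟪vψ, (h : L2)⟫_ℂ • uφ = 0 := by
        rcases h2 with h2 | h2
        · rw [Tuφ.mpr h2, smul_zero]
        · rw [Tvψ.mpr h2, inner_zero_left, zero_smul]
      rw [z1, z2, add_zero]
    · have hufl : uf = l • uφ := sub_eq_zero.mp ((Tii l).mpr hk)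
      have hvψl : vψ = -(conj l • vg) := eq_neg_of_add_eq_zero_left ((Tjj l).mpr hj)
      rw [hufl, hvψl, inner_neg_left, inner_smul_left, Complex.conj_conj,
        smul_smul, ← add_smul]
      have hz : ⟪vg, (h : L2)⟫_ℂ * l + -(l * ⟪vg, (h : L2)⟫_ℂ) = 0 := by ring
      rw [hz, zero_smul]

end Ops
/-- `T_f T_g + T_φ T_ψ` is a Toeplitz operator iff the rank-one operator
`(V H_{f̄} 1) ⊗ (V H_g 1) + (V H_{φ̄} 1) ⊗ (V H_ψ 1)` vanishes, iff either
(i) (`f̄ ∈ H²` or `g ∈ H²`) and (`φ̄ ∈ H²` or `ψ ∈ H²`), or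
(ii) `f − λφ ∈ conj(H²)` and `ψ + λg ∈ H²` for some nonzero `λ`;
and in all these cases `T_f T_g + T_φ T_ψ = T_{fg + φψ}`. -/
theorem sum_of_products_toeplitz_iff (f g φ ψ : Linf) :
    (Toep zbarL ∘L ((Toep f ∘L Toep g + Toep φ ∘L Toep ψ) ∘L Toep zL)
        = Toep f ∘L Toep g + Toep φ ∘L Toep ψ
      ↔ ∀ h : Hardy,
          ⟪Vop (Hank g oneH), (h : L2)⟫_ℂ • Vop (Hank (conjLinf f) oneH)
            + ⟪Vop (Hank ψ oneH), (h : L2)⟫_ℂ • Vop (Hank (conjLinf φ) oneH) = 0) ∧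
    (Toep zbarL ∘L ((Toep f ∘L Toep g + Toep φ ∘L Toep ψ) ∘L Toep zL)
        = Toep f ∘L Toep g + Toep φ ∘L Toep ψ
      ↔ ((toL2 (conjLinf f) ∈ Hardy ∨ toL2 g ∈ Hardy)
            ∧ (toL2 (conjLinf φ) ∈ Hardy ∨ toL2 ψ ∈ Hardy))
          ∨ ∃ l : ℂ, l ≠ 0 ∧ toL2 (conjLinf (f - l • φ)) ∈ Hardy
              ∧ toL2 (ψ + l • g) ∈ Hardy) ∧
    (Toep zbarL ∘L ((Toep f ∘L Toep g + Toep φ ∘L Toep ψ) ∘L Toep zL)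
        = Toep f ∘L Toep g + Toep φ ∘L Toep ψ
      → Toep f ∘L Toep g + Toep φ ∘L Toep ψ = Toep (mulLinf f g + mulLinf φ ψ)) := by
  have I1 := op_iff f g φ ψ
  have I2 := ranktwo f g φ ψ
  refine ⟨I1, I1.trans I2, ?_⟩
  intro hop
  have hc := I2.mp (I1.mp hop)
  apply ContinuousLinearMap.ext
  intro h
  apply Subtype.ext
  calc (((Toep f ∘L Toep g + Toep φ ∘L Toep ψ) h : Hardy) : L2)
      = PFull (mulCLM f (PFull (mulCLM g (h : L2))))
        + PFull (mulCLM φ (PFull (mulCLM ψ (h : L2)))) := rhs_coe f g φ ψ h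
    _ = PFull (mulCLM (mulLinf f g + mulLinf φ ψ) (h : L2)) :=
        prod_sum_eq f g φ ψ (h : L2) (hardy_cf h) hc
    _ = ((Toep (mulLinf f g + mulLinf φ ψ) h : Hardy) : L2) := rfl

end ToeplitzProj
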